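/- Identify ℝ² with ℂ. A symmetric bilinear map B : ℂ × ℂ → ℂ (over ℝ) satisfies ⟨B(X,Z), B(Y,Z)⟩ = C·⟨X,Y⟩·|Z|² for all X,Y,Z ∈ ℂ (with the real inner product ⟨u,v⟩ = Re(u·conj(v))) if and only if there exists θ ∈ ℝ such that B(X,Y) = ±√C·e^{iθ}·X·Y or B(X,Y) = ±√C·e^{iθ}·conj(X)·conj(Y). -/

import Mathlib

private lemma stmt3_aux (C nZ : ℝ) (p q : ℂ)
    (H : ∀ x : ℂ, ((p * x + q * (starRingEnd ℂ) x) *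
        (starRingEnd ℂ) (p * x + q * (starRingEnd ℂ) x)).re
      = C * (x * (starRingEnd ℂ) x).re * nZ) :
    p = 0 ∨ q = 0 := by
  have E1 := H 1
  have E2 := H Complex.I
  have E3 := H (1 + Complex.I)
  simp only [Complex.mul_re, Complex.mul_im, Complex.conj_re, Complex.conj_im,
    Complex.add_re, Complex.add_im, Complex.one_re, Complex.one_im,
    Complex.I_re, Complex.I_im] at E1 E2 E3
  ring_nf at E1 E2 E3
  have hpq : p * (starRingEnd ℂ) q = 0 := by
    apply Complex.ext <;>
      simp only [Complex.mul_re, Complex.mul_im, Complex.conj_re, Complex.conj_im,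
        Complex.zero_re, Complex.zero_im] <;> nlinarith [E1, E2, E3]
  rcases mul_eq_zero.mp hpq with h' | h'
  · exact Or.inl h'
  · right
    simpa using congrArg (starRingEnd ℂ) h'

/-- Identifying `ℝ²` with `ℂ` (real inner product `⟨u, v⟩ = Re (u * conj v)`), a symmetric
`ℝ`-bilinear map `B : ℂ × ℂ → ℂ` satisfies `⟨B X Z, B Y Z⟩ = C ⟨X, Y⟩ |Z|²` for all
`X Y Z` if and only if `B (X, Y) = ± √C e^{iθ} X Y` or `B (X, Y) = ± √C e^{iθ} X̄ Ȳ`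
for some angle `θ`. -/
theorem stmt3 (C : ℝ) (hC : 0 ≤ C)
    (B : ℂ →ₗ[ℝ] ℂ →ₗ[ℝ] ℂ) (hsymm : ∀ X Y : ℂ, B X Y = B Y X) :
    (∀ X Y Z : ℂ,
        (B X Z * (starRingEnd ℂ) (B Y Z)).re
          = C * (X * (starRingEnd ℂ) Y).re * (Z * (starRingEnd ℂ) Z).re)
    ↔ ∃ θ : ℝ, ∃ ε : ℝ, (ε = 1 ∨ ε = -1) ∧
        ((∀ X Y : ℂ, B X Y = (ε * Real.sqrt C : ℝ) •
            (Complex.exp (θ * Complex.I) * X * Y)) ∨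
         (∀ X Y : ℂ, B X Y = (ε * Real.sqrt C : ℝ) •
            (Complex.exp (θ * Complex.I) * (starRingEnd ℂ) X * (starRingEnd ℂ) Y))) := by
  constructor
  · intro h
    obtain ⟨P, hPdef⟩ : ∃ P : ℂ → ℂ,
        P = fun Z => (B 1 Z - Complex.I * B Complex.I Z) / 2 := ⟨_, rfl⟩
    obtain ⟨Q, hQdef⟩ : ∃ Q : ℂ → ℂ,
        Q = fun Z => (B 1 Z + Complex.I * B Complex.I Z) / 2 := ⟨_, rfl⟩
    have hrep : ∀ z Z : ℂ, B z Z = P Z * z + Q Z * (starRingEnd ℂ) z := by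
      intro z Z
      have h1 : B z Z = (z.re : ℂ) * B 1 Z + (z.im : ℂ) * B Complex.I Z := by
        have hz : z = z.re • (1 : ℂ) + z.im • Complex.I := by
          simp [Complex.real_smul, Complex.re_add_im]
        conv_lhs => rw [hz]
        rw [map_add, map_smul, map_smul]
        simp [Complex.real_smul]
      rw [h1]
      simp only [hPdef, hQdef]
      have hcz : (starRingEnd ℂ) z = (z.re : ℂ) - (z.im : ℂ) * Complex.I := by
        apply Complex.ext <;> simp
      rw [hcz]
      nth_rewrite 3 [(Complex.re_add_im z).symm]
      linear_combination ((z.im : ℂ) * B Complex.I Z) * Complex.I_sq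
    have hdisj : ∀ Z : ℂ, P Z = 0 ∨ Q Z = 0 := by
      intro Z
      refine stmt3_aux C ((Z * (starRingEnd ℂ) Z).re) (P Z) (Q Z) ?_
      intro x
      rw [← hrep x Z]
      exact h x x Z
    have hglob : (∀ Z, P Z = 0) ∨ (∀ Z, Q Z = 0) := by
      by_contra hcon
      push_neg at hcon
      obtain ⟨⟨Z1, hZ1⟩, ⟨Z2, hZ2⟩⟩ := hcon
      have hQ1 : Q Z1 = 0 := (hdisj Z1).resolve_left hZ1
      have hP2 : P Z2 = 0 := (hdisj Z2).resolve_right hZ2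
      have hPadd : P (Z1 + Z2) = P Z1 + P Z2 := by
        simp only [hPdef]
        rw [map_add, map_add]
        ring
      have hQadd : Q (Z1 + Z2) = Q Z1 + Q Z2 := by
        simp only [hQdef]
        rw [map_add, map_add]
        ring
      rcases hdisj (Z1 + Z2) with hc | hc
      · rw [hPadd, hP2, add_zero] at hc
        exact hZ1 hc
      · rw [hQadd, hQ1, zero_add] at hc
        exact hZ2 hc
    have hC2 : (B 1 1).re ^ 2 + (B 1 1).im ^ 2 = C := by
      have h111 := h 1 1 1
      simp only [Complex.mul_re, Complex.conj_re, Complex.conj_im,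
        Complex.one_re, Complex.one_im] at h111
      nlinarith [h111]
    have habs' : ((1 : ℝ) * Real.sqrt C) = ‖B 1 1‖ := by
      rw [one_mul, Complex.norm_def, Complex.normSq_apply, ← hC2]
      ring_nf
    have harg := Complex.norm_mul_exp_arg_mul_I (B 1 1)
    rcases hglob with hP0 | hQ0
    · -- antiholomorphic case
      have hQone : Q 1 = B 1 1 := by
        simpa [hP0 1] using (hrep 1 1).symm
      have hQY : ∀ Y : ℂ, Q Y = B 1 1 * (starRingEnd ℂ) Y := by
        intro Y
        have e1 := hrep 1 Y
        rw [hP0 Y, hsymm 1 Y, hrep Y 1, hP0 1, hQone] at e1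
        simpa using e1.symm
      refine ⟨(B 1 1).arg, 1, Or.inl rfl, Or.inr ?_⟩
      intro X Y
      rw [hrep X Y, hP0 Y, hQY Y, habs', Complex.real_smul]
      linear_combination (-((starRingEnd ℂ) X * (starRingEnd ℂ) Y)) * harg
    · -- holomorphic case
      have hPone : P 1 = B 1 1 := by
        simpa [hQ0 1] using (hrep 1 1).symm
      have hPY : ∀ Y : ℂ, P Y = B 1 1 * Y := by
        intro Y
        have e1 := hrep 1 Y
        rw [hQ0 Y, hsymm 1 Y, hrep Y 1, hQ0 1, hPone] at e1
        simpa using e1.symm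
      refine ⟨(B 1 1).arg, 1, Or.inl rfl, Or.inl ?_⟩
      intro X Y
      rw [hrep X Y, hQ0 Y, hPY Y, habs', Complex.real_smul]
      linear_combination (-(X * Y)) * harg
  · rintro ⟨θ, ε, hε, hcase⟩
    intro X Y Z
    have he : Complex.exp (↑θ * Complex.I) * (starRingEnd ℂ) (Complex.exp (↑θ * Complex.I)) = 1 := by
      rw [Complex.mul_conj, ← Complex.sq_norm, Complex.norm_exp_ofReal_mul_I]
      norm_num
    have hrr : ((ε * Real.sqrt C : ℝ) : ℂ) * ((ε * Real.sqrt C : ℝ) : ℂ) = (C : ℂ) := by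
      have h2 : (ε * Real.sqrt C) * (ε * Real.sqrt C) = C := by
        rcases hε with rfl | rfl <;> simp [Real.sq_sqrt hC] <;> nlinarith [Real.sq_sqrt hC]
      exact_mod_cast congrArg Complex.ofReal h2
    rcases hcase with hc | hc
    · rw [hc X Z, hc Y Z]
      have expand : ((ε * Real.sqrt C : ℝ) • (Complex.exp (θ * Complex.I) * X * Z)) *
          (starRingEnd ℂ) ((ε * Real.sqrt C : ℝ) • (Complex.exp (θ * Complex.I) * Y * Z))
          = (C : ℂ) * ((X * (starRingEnd ℂ) Y) * (Z * (starRingEnd ℂ) Z)) := by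
        simp only [Complex.real_smul, map_mul, Complex.conj_ofReal]
        linear_combination (((ε * Real.sqrt C : ℝ) : ℂ) * ((ε * Real.sqrt C : ℝ) : ℂ) *
            (X * (starRingEnd ℂ) Y * (Z * (starRingEnd ℂ) Z))) * he
          + (X * (starRingEnd ℂ) Y * (Z * (starRingEnd ℂ) Z)) * hrr
      rw [expand]
      simp [Complex.mul_re, Complex.mul_im, Complex.conj_re, Complex.conj_im,
        Complex.ofReal_re, Complex.ofReal_im]
      ring
    · rw [hc X Z, hc Y Z]
      have expand : ((ε * Real.sqrt C : ℝ) • (Complex.exp (θ * Complex.I) * (starRingEnd ℂ) X * (starRingEnd ℂ) Z)) *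
          (starRingEnd ℂ) ((ε * Real.sqrt C : ℝ) • (Complex.exp (θ * Complex.I) * (starRingEnd ℂ) Y * (starRingEnd ℂ) Z))
          = (C : ℂ) * (((starRingEnd ℂ) X * Y) * ((starRingEnd ℂ) Z * Z)) := by
        simp only [Complex.real_smul, map_mul, Complex.conj_ofReal, Complex.conj_conj]
        linear_combination (((ε * Real.sqrt C : ℝ) : ℂ) * ((ε * Real.sqrt C : ℝ) : ℂ) *
            ((starRingEnd ℂ) X * Y * ((starRingEnd ℂ) Z * Z))) * he
          + ((starRingEnd ℂ) X * Y * ((starRingEnd ℂ) Z * Z)) * hrr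
      rw [expand]
      simp [Complex.mul_re, Complex.mul_im, Complex.conj_re, Complex.conj_im,
        Complex.ofReal_re, Complex.ofReal_im]
      ring
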